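/- In the additive Gaussian channel y = ρx + w, the ρ-derivative of the likelihood ratio satisfies (d/dρ)ℓ(u) = ℓ(u)·( ⟨E[x|y=u], u⟩ − ρ E[|x|² | y = u] ) for every u, where the conditional expectations are the posterior means given y = u. -/

import Mathlib

open MeasureTheory Real
open scoped RealInnerProductSpace ENNReal

noncomputable def stdGaussian (n : ℕ) : Measure (EuclideanSpace ℝ (Fin n)) :=
  volume.withDensity
    (fun w => ENNReal.ofReal ((2 * π) ^ (-(n : ℝ) / 2) * Real.exp (-‖w‖ ^ 2 / 2)))

noncomputable def lik (n : ℕ) (ρ : ℝ) (μX : Measure (EuclideanSpace ℝ (Fin n)))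
    (u : EuclideanSpace ℝ (Fin n)) : ℝ :=
  ∫ x, Real.exp (ρ * ⟪u, x⟫ - ρ ^ 2 / 2 * ‖x‖ ^ 2) ∂μX

noncomputable def postExp (n : ℕ) (ρ : ℝ) (μX : Measure (EuclideanSpace ℝ (Fin n)))
    (F : EuclideanSpace ℝ (Fin n) → ℝ) (u : EuclideanSpace ℝ (Fin n)) : ℝ :=
  (lik n ρ μX u)⁻¹ * ∫ x, Real.exp (ρ * ⟪u, x⟫ - ρ ^ 2 / 2 * ‖x‖ ^ 2) * F x ∂μX

noncomputable def postMean (n : ℕ) (ρ : ℝ) (μX : Measure (EuclideanSpace ℝ (Fin n)))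
    (u : EuclideanSpace ℝ (Fin n)) : EuclideanSpace ℝ (Fin n) :=
  (lik n ρ μX u)⁻¹ • ∫ x, Real.exp (ρ * ⟪u, x⟫ - ρ ^ 2 / 2 * ‖x‖ ^ 2) • x ∂μX

lemma aux_poly_exp (a b C c t : ℝ) (ha : 0 ≤ a) (hb : 0 ≤ b) (hc : 0 < c) (ht : 0 ≤ t) :
    (a*t + b*t^2) * Real.exp (C*t - c*t^2) ≤ Real.exp (C^2/(2*c)) * (a + 2*(a+b)/c) := by
  set D := C^2/(2*c) with hD
  have hDc : C^2 = D * (2*c) := by rw [hD, div_mul_cancel₀]; positivity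
  have h1 : C*t - c*t^2 ≤ D - (c/2)*t^2 := by nlinarith [sq_nonneg (C - c*t)]
  have h2 : Real.exp (C*t - c*t^2) ≤ Real.exp D * Real.exp (-((c/2)*t^2)) := by
    rw [← Real.exp_add]; exact Real.exp_le_exp.2 (by linarith)
  set E := Real.exp (-((c/2)*t^2)) with hE
  have hE0 : 0 < E := Real.exp_pos _
  have hE1 : E * (1 + (c/2)*t^2) ≤ 1 := by
    rw [hE, Real.exp_neg, inv_mul_le_iff₀ (Real.exp_pos _), mul_one]
    have := Real.add_one_le_exp ((c/2)*t^2)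
    linarith
  have hEle1 : E ≤ 1 := by nlinarith [mul_nonneg (mul_nonneg hc.le (sq_nonneg t)) hE0.le]
  have hpos : 0 ≤ a*t + b*t^2 := by positivity
  have key : (a*t + b*t^2) * E ≤ a + 2*(a+b)/c := by
    set m := 2*(a+b)/c with hm
    have hmc : m * c = 2*(a+b) := by rw [hm, div_mul_cancel₀]; positivity
    have ht2 : t ≤ 1 + t^2 := by nlinarith [sq_nonneg (t-1)]
    have hq : c * (t^2 * E) ≤ 2 := by nlinarith
    have hq2 : (a+b) * (t^2*E) ≤ m := by
      have h3 := mul_le_mul_of_nonneg_left hq (add_nonneg ha hb)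
      refine le_of_mul_le_mul_right ?_ hc
      nlinarith
    have hlin : a*(t*E) ≤ a*E + a*(t^2*E) := by
      nlinarith [mul_le_mul_of_nonneg_left ht2 (mul_nonneg ha hE0.le)]
    nlinarith [mul_le_mul_of_nonneg_left hEle1 ha]
  calc (a*t + b*t^2) * Real.exp (C*t - c*t^2) ≤ (a*t + b*t^2) * (Real.exp D * E) :=
        mul_le_mul_of_nonneg_left h2 hpos
    _ = Real.exp D * ((a*t + b*t^2) * E) := by ring
    _ ≤ Real.exp D * (a + 2*(a+b)/c) := mul_le_mul_of_nonneg_left key (Real.exp_pos D).le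

/-- (d/dρ) ℓ(u) = ℓ(u) (⟨E[x|y=u], u⟩ − ρ E[|x|² | y=u]). -/
theorem deriv_likelihood_in_rho (n : ℕ) (ρ : ℝ) (hρ : 0 < ρ)
    (μX : Measure (EuclideanSpace ℝ (Fin n))) [IsProbabilityMeasure μX]
    (hexp : ∀ (α : ℝ) (h : EuclideanSpace ℝ (Fin n)),
      Integrable (fun x => Real.exp (α * ⟪x, h⟫)) μX)
    (u : EuclideanSpace ℝ (Fin n)) :
    HasDerivAt (fun r => lik n r μX u)
      (lik n ρ μX u * (⟪postMean n ρ μX u, u⟫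
        - ρ * postExp n ρ μX (fun x => ‖x‖ ^ 2) u)) ρ := by
  classical
  have habs : ∀ x : EuclideanSpace ℝ (Fin n), |⟪u, x⟫| ≤ ‖u‖ * ‖x‖ := fun x => abs_real_inner_le_norm u x
  -- continuity of the integrands
  have hcont : ∀ r : ℝ, Continuous fun x : EuclideanSpace ℝ (Fin n) =>
      Real.exp (r * ⟪u, x⟫ - r ^ 2 / 2 * ‖x‖ ^ 2) := fun r =>
    Real.continuous_exp.comp ((continuous_const.mul
      (continuous_const.inner continuous_id)).sub
      (continuous_const.mul (continuous_norm.pow 2)))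
  have hcontF' : ∀ r : ℝ, Continuous fun x : EuclideanSpace ℝ (Fin n) =>
      (⟪u, x⟫ - r * ‖x‖ ^ 2) * Real.exp (r * ⟪u, x⟫ - r ^ 2 / 2 * ‖x‖ ^ 2) := fun r =>
    ((continuous_const.inner continuous_id).sub
      (continuous_const.mul (continuous_norm.pow 2))).mul (hcont r)
  -- pointwise derivative in r
  have hderiv_pt : ∀ (x : EuclideanSpace ℝ (Fin n)) (r : ℝ),
      HasDerivAt (fun r : ℝ => Real.exp (r * ⟪u, x⟫ - r ^ 2 / 2 * ‖x‖ ^ 2))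
        ((⟪u, x⟫ - r * ‖x‖ ^ 2) * Real.exp (r * ⟪u, x⟫ - r ^ 2 / 2 * ‖x‖ ^ 2)) r := by
    intro x r
    have ha : HasDerivAt (fun r : ℝ => r * ⟪u,x⟫) (⟪u,x⟫) r := by
      simpa using (hasDerivAt_id r).mul_const ⟪u,x⟫
    have hb : HasDerivAt (fun r : ℝ => r^2/2*‖x‖^2) (r*‖x‖^2) r := by
      have := ((hasDerivAt_pow 2 r).div_const 2).mul_const (‖x‖^2)
      exact this.congr_deriv (by norm_num)
    have := (ha.sub hb).exp
    convert this using 1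
    · rfl
    · simp only [Pi.sub_apply]; ring
  -- integrability of the integrand at ρ
  have hFint : Integrable (fun x : EuclideanSpace ℝ (Fin n) => Real.exp (ρ * ⟪u, x⟫ - ρ ^ 2 / 2 * ‖x‖ ^ 2)) μX := by
    refine (hexp ρ u).mono (hcont ρ).aestronglyMeasurable (ae_of_all _ fun x => ?_)
    rw [Real.norm_eq_abs, Real.norm_eq_abs, Real.abs_exp, Real.abs_exp]
    apply Real.exp_le_exp.2
    rw [real_inner_comm x u]
    have : (0:ℝ) ≤ ρ ^ 2 / 2 * ‖x‖ ^ 2 := by positivity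
    linarith
  -- positivity of lik
  have hlik : 0 < lik n ρ μX u := by
    rw [lik]
    exact integral_exp_pos hFint
  -- generic pointwise exponential-bound fact at parameter r ≥ 0, r ≤ R
  have hptw : ∀ (a b r : ℝ), 0 ≤ a → 0 ≤ b → 0 ≤ r → ∀ x : EuclideanSpace ℝ (Fin n),
      (a*‖x‖ + b*‖x‖^2) * Real.exp (r * ⟪u, x⟫ - ρ ^ 2 / 8 * ‖x‖ ^ 2) ≤
      Real.exp ((r*‖u‖)^2/(2*(ρ^2/8))) * (a + 2*(a+b)/(ρ^2/8)) := by
    intro a b r ha hb hr x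
    have h1 : r * ⟪u, x⟫ - ρ ^ 2 / 8 * ‖x‖ ^ 2 ≤ (r*‖u‖)*‖x‖ - (ρ^2/8)*‖x‖^2 := by
      have hi := abs_le.1 (habs x)
      nlinarith [mul_le_mul_of_nonneg_left hi.2 hr]
    have h2 := mul_le_mul_of_nonneg_left (Real.exp_le_exp.2 h1)
      (by positivity : (0:ℝ) ≤ a*‖x‖ + b*‖x‖^2)
    exact h2.trans (aux_poly_exp a b (r*‖u‖) (ρ^2/8) ‖x‖ ha hb (by positivity) (norm_nonneg x))
  -- integrable-of-bounded helper
  have hbd_int : ∀ (g : EuclideanSpace ℝ (Fin n) → ℝ) (K : ℝ), Continuous g → (∀ x, ‖g x‖ ≤ K) →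
      Integrable g μX := fun g K hg hK =>
    (integrable_const K).mono' hg.aestronglyMeasurable (ae_of_all _ hK)
  -- key bound at parameter ρ: exp(ρ⟪u,x⟫ - ρ²/2‖x‖²) ≤ exp(ρ⟪u,x⟫ - ρ²/8‖x‖²)
  have hmid : ∀ x : EuclideanSpace ℝ (Fin n), Real.exp (ρ * ⟪u, x⟫ - ρ ^ 2 / 2 * ‖x‖ ^ 2) ≤
      Real.exp (ρ * ⟪u, x⟫ - ρ ^ 2 / 8 * ‖x‖ ^ 2) := by
    intro x
    apply Real.exp_le_exp.2
    nlinarith [sq_nonneg ρ, sq_nonneg ‖x‖, mul_nonneg (sq_nonneg ρ) (sq_nonneg ‖x‖)]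
  -- integrability of the three auxiliary integrands at ρ
  have J1 : Integrable (fun x : EuclideanSpace ℝ (Fin n) =>
      Real.exp (ρ * ⟪u, x⟫ - ρ ^ 2 / 2 * ‖x‖ ^ 2) * ⟪u, x⟫) μX := by
    refine hbd_int _ (Real.exp ((ρ*‖u‖)^2/(2*(ρ^2/8))) * (‖u‖ + 2*(‖u‖+0)/(ρ^2/8)))
      ((hcont ρ).mul (continuous_const.inner continuous_id)) (fun x => ?_)
    rw [Real.norm_eq_abs, abs_mul, Real.abs_exp]
    calc Real.exp (ρ * ⟪u, x⟫ - ρ ^ 2 / 2 * ‖x‖ ^ 2) * |⟪u,x⟫|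
        ≤ (‖u‖*‖x‖ + 0*‖x‖^2) * Real.exp (ρ * ⟪u, x⟫ - ρ ^ 2 / 8 * ‖x‖ ^ 2) := by
          have := mul_le_mul (hmid x) (habs x) (abs_nonneg _) (Real.exp_pos _).le
          nlinarith [this]
      _ ≤ _ := hptw ‖u‖ 0 ρ (norm_nonneg u) le_rfl hρ.le x
  have J2 : Integrable (fun x : EuclideanSpace ℝ (Fin n) =>
      Real.exp (ρ * ⟪u, x⟫ - ρ ^ 2 / 2 * ‖x‖ ^ 2) * ‖x‖^2) μX := by
    refine hbd_int _ (Real.exp ((ρ*‖u‖)^2/(2*(ρ^2/8))) * (0 + 2*(0+1)/(ρ^2/8)))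
      ((hcont ρ).mul (continuous_norm.pow 2)) (fun x => ?_)
    rw [Real.norm_eq_abs, abs_mul, Real.abs_exp, abs_of_nonneg (by positivity : (0:ℝ) ≤ ‖x‖^2)]
    calc Real.exp (ρ * ⟪u, x⟫ - ρ ^ 2 / 2 * ‖x‖ ^ 2) * ‖x‖^2
        ≤ (0*‖x‖ + 1*‖x‖^2) * Real.exp (ρ * ⟪u, x⟫ - ρ ^ 2 / 8 * ‖x‖ ^ 2) := by
          nlinarith [mul_le_mul_of_nonneg_right (hmid x) (by positivity : (0:ℝ) ≤ ‖x‖^2)]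
      _ ≤ _ := hptw 0 1 ρ le_rfl zero_le_one hρ.le x
  have Jv : Integrable (fun x : EuclideanSpace ℝ (Fin n) =>
      Real.exp (ρ * ⟪u, x⟫ - ρ ^ 2 / 2 * ‖x‖ ^ 2) • x) μX := by
    refine (integrable_const (Real.exp ((ρ*‖u‖)^2/(2*(ρ^2/8))) * (1 + 2*(1+0)/(ρ^2/8)))).mono'
      ((hcont ρ).smul continuous_id).aestronglyMeasurable (ae_of_all _ fun x => ?_)
    rw [norm_smul, Real.norm_eq_abs, Real.abs_exp]
    calc Real.exp (ρ * ⟪u, x⟫ - ρ ^ 2 / 2 * ‖x‖ ^ 2) * ‖x‖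
        ≤ (1*‖x‖ + 0*‖x‖^2) * Real.exp (ρ * ⟪u, x⟫ - ρ ^ 2 / 8 * ‖x‖ ^ 2) := by
          nlinarith [mul_le_mul_of_nonneg_right (hmid x) (norm_nonneg x)]
      _ ≤ _ := hptw 1 0 ρ zero_le_one le_rfl hρ.le x
  -- the dominated differentiation lemma
  set M : ℝ := Real.exp (((3/2*ρ)*‖u‖)^2/(2*(ρ^2/8))) * (‖u‖ + 2*(‖u‖+3/2*ρ)/(ρ^2/8)) with hM
  have main := hasDerivAt_integral_of_dominated_loc_of_deriv_le
    (F := fun r (x : EuclideanSpace ℝ (Fin n)) => Real.exp (r * ⟪u, x⟫ - r ^ 2 / 2 * ‖x‖ ^ 2))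
    (F' := fun r (x : EuclideanSpace ℝ (Fin n)) => (⟪u, x⟫ - r * ‖x‖ ^ 2) *
      Real.exp (r * ⟪u, x⟫ - r ^ 2 / 2 * ‖x‖ ^ 2))
    (x₀ := ρ) (bound := fun _ => M) (μ := μX)
    (Metric.ball_mem_nhds ρ (by positivity : (0:ℝ) < ρ/2))
    (Filter.Eventually.of_forall fun r => (hcont r).aestronglyMeasurable)
    hFint
    ((hcontF' ρ).aestronglyMeasurable)
    (ae_of_all _ ?_)
    (integrable_const M)
    (ae_of_all _ fun x r _ => hderiv_pt x r)
  · -- conclude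
    have hd := main.2
    have hkey : (∫ x, (⟪u, x⟫ - ρ * ‖x‖ ^ 2) *
        Real.exp (ρ * ⟪u, x⟫ - ρ ^ 2 / 2 * ‖x‖ ^ 2) ∂μX) =
        lik n ρ μX u * (⟪postMean n ρ μX u, u⟫
          - ρ * postExp n ρ μX (fun x => ‖x‖ ^ 2) u) := by
      have e1 : ⟪postMean n ρ μX u, u⟫ = (lik n ρ μX u)⁻¹ *
          ∫ x, Real.exp (ρ * ⟪u, x⟫ - ρ ^ 2 / 2 * ‖x‖ ^ 2) * ⟪u, x⟫ ∂μX := by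
        rw [postMean, real_inner_smul_left]
        congr 1
        rw [real_inner_comm, ← integral_inner Jv u]
        congr 1
        funext x
        rw [real_inner_smul_right]
      have e2 : postExp n ρ μX (fun x => ‖x‖ ^ 2) u = (lik n ρ μX u)⁻¹ *
          ∫ x, Real.exp (ρ * ⟪u, x⟫ - ρ ^ 2 / 2 * ‖x‖ ^ 2) * ‖x‖ ^ 2 ∂μX := rfl
      have hsplit : (∫ x, (⟪u, x⟫ - ρ * ‖x‖ ^ 2) *
          Real.exp (ρ * ⟪u, x⟫ - ρ ^ 2 / 2 * ‖x‖ ^ 2) ∂μX) =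
          (∫ x, Real.exp (ρ * ⟪u, x⟫ - ρ ^ 2 / 2 * ‖x‖ ^ 2) * ⟪u, x⟫ ∂μX) -
          ρ * ∫ x, Real.exp (ρ * ⟪u, x⟫ - ρ ^ 2 / 2 * ‖x‖ ^ 2) * ‖x‖ ^ 2 ∂μX := by
        rw [← integral_const_mul ρ, ← integral_sub J1 (J2.const_mul ρ)]
        congr 1
        funext x
        ring
      rw [hsplit, e1, e2]
      rw [mul_sub, ← mul_assoc, mul_inv_cancel₀ hlik.ne', one_mul, mul_left_comm (lik n ρ μX u) ρ,
        ← mul_assoc (lik n ρ μX u), mul_inv_cancel₀ hlik.ne', one_mul]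
    rw [lik] at hkey ⊢
    simp only [lik]
    rw [← hkey]
    exact hd
  · -- the uniform bound on the ball
    intro x r hr
    rw [Metric.mem_ball, Real.dist_eq, abs_lt] at hr
    have hr1 : ρ/2 < r := by linarith [hr.1]
    have hr2 : r < 3/2*ρ := by linarith [hr.2]
    have hr0 : 0 < r := lt_of_lt_of_le (by positivity) hr1.le
    rw [Real.norm_eq_abs, abs_mul, Real.abs_exp]
    have hi := abs_le.1 (habs x)
    have stepA : |⟪u, x⟫ - r * ‖x‖ ^ 2| ≤ ‖u‖*‖x‖ + (3/2*ρ)*‖x‖^2 := by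
      rw [abs_sub_comm]  -- not needed; use abs_sub
      calc |r * ‖x‖ ^ 2 - ⟪u, x⟫| ≤ |r * ‖x‖ ^ 2| + |⟪u, x⟫| := abs_sub _ _
        _ ≤ ‖u‖*‖x‖ + (3/2*ρ)*‖x‖^2 := by
            rw [abs_mul, abs_of_pos hr0, abs_of_nonneg (by positivity : (0:ℝ) ≤ ‖x‖^2)]
            nlinarith [habs x, sq_nonneg ‖x‖]
    have stepB : r * ⟪u, x⟫ - r ^ 2 / 2 * ‖x‖ ^ 2 ≤
        ((3/2*ρ)*‖u‖)*‖x‖ - (ρ^2/8)*‖x‖^2 := by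
      have h1 : r * ⟪u, x⟫ ≤ (3/2*ρ)*(‖u‖*‖x‖) := by
        nlinarith [mul_nonneg (by linarith : (0:ℝ) ≤ 3/2*ρ - r)
            (by nlinarith [hi.1, hi.2, norm_nonneg u, norm_nonneg x] : (0:ℝ) ≤ ‖u‖*‖x‖),
          mul_nonneg hr0.le (by linarith [hi.2] : (0:ℝ) ≤ ‖u‖*‖x‖ - ⟪u,x⟫)]
      have h2 : (ρ^2/8) ≤ r^2/2 := by nlinarith
      nlinarith [sq_nonneg ‖x‖, mul_le_mul_of_nonneg_left h2 (sq_nonneg ‖x‖)]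
    calc |⟪u, x⟫ - r * ‖x‖ ^ 2| * Real.exp (r * ⟪u, x⟫ - r ^ 2 / 2 * ‖x‖ ^ 2)
        ≤ (‖u‖*‖x‖ + (3/2*ρ)*‖x‖^2) *
          Real.exp (((3/2*ρ)*‖u‖)*‖x‖ - (ρ^2/8)*‖x‖^2) := by
          apply mul_le_mul stepA (Real.exp_le_exp.2 stepB) (Real.exp_pos _).le (by positivity)
      _ ≤ M := by
          rw [hM]
          exact aux_poly_exp ‖u‖ (3/2*ρ) ((3/2*ρ)*‖u‖) (ρ^2/8) ‖x‖ (norm_nonneg u)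
            (by positivity) (by positivity) (norm_nonneg x)
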